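/- arXiv:1203.0190 — 4 statements merged into one kernel-verified Lean document; each statement's English description precedes it below -/
import Mathlib

section
/- Let g : [x₀,∞) → ℝ be an increasing, absolutely continuous function with lim_{x→∞} g(x) = ∞, and let δ > 0. Then the set E = { x ≥ x₀ : g is differentiable at x and g'(x) > g(x)^{1+δ} } has finite Lebesgue measure. -/
open MeasureTheory Set Filter

/-- Growth lemma: if `g` is increasing and absolutely continuous on `[x₀,∞)` with
`g(x) → ∞`, and `δ > 0`, then the set where `g'(x) > g(x)^{1+δ}` has finite measure. -/
theorem stmt3 (x₀ δ : ℝ) (hδ : 0 < δ) (g : ℝ → ℝ)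
    (hmono : MonotoneOn g (Set.Ici x₀))
    (htop : Tendsto g atTop atTop)
    (hAC : ∀ a b : ℝ, x₀ ≤ a → a ≤ b → g b - g a = ∫ x in a..b, deriv g x) :
    volume {x : ℝ | x₀ ≤ x ∧ DifferentiableAt ℝ g x ∧ g x ^ (1 + δ) < deriv g x} < ⊤ := by
  set E := {x : ℝ | x₀ ≤ x ∧ DifferentiableAt ℝ g x ∧ g x ^ (1 + δ) < deriv g x} with hE
  -- a point beyond which `g ≥ 1`
  obtain ⟨c, hc⟩ : ∃ c : ℝ, ∀ x ≥ c, 1 ≤ g x :=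
    eventually_atTop.1 (htop.eventually (eventually_ge_atTop (1 : ℝ)))
  set x₁ : ℝ := max (x₀ + 1) c with hx₁def
  have hx₁0 : x₀ < x₁ := lt_of_lt_of_le (by linarith) (le_max_left _ _)
  have hx₁g : ∀ x, x₁ ≤ x → 1 ≤ g x := fun x hx => hc x (le_trans (le_max_right _ _) hx)
  -- Step A : integrability of `deriv g` on subintervals of `[x₀, ∞)`
  have hInt : ∀ a b : ℝ, x₀ ≤ a → a ≤ b → IntervalIntegrable (deriv g) volume a b := by
    intro a b ha hab
    by_contra hni
    have h0 : g b - g a = 0 := by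
      rw [hAC a b ha hab, intervalIntegral.integral_undef hni]
    have hconst : ∀ x ∈ Icc a b, g x = g a := by
      intro x hx
      have h1 : g a ≤ g x := hmono ha (le_trans ha hx.1) hx.1
      have h2 : g x ≤ g b := hmono (le_trans ha hx.1) (le_trans ha hab) hx.2
      linarith
    have hderiv0 : ∀ x ∈ Ioo a b, deriv g x = 0 := by
      intro x hx
      have heq : g =ᶠ[nhds x] fun _ => g a := by
        filter_upwards [Ioo_mem_nhds hx.1 hx.2] with y hy
        exact hconst y (Ioo_subset_Icc_self hy)
      rw [heq.deriv_eq, deriv_const]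
    have hnull : volume (Icc a b \ Ioo a b) = 0 := by
      apply measure_mono_null (t := ({a, b} : Set ℝ))
      · rw [Icc_diff_Ioo_same hab]
      · exact (Set.Countable.measure_zero ((Set.countable_singleton b).insert a) _)
    have haeq : deriv g =ᵐ[volume.restrict (Icc a b)] (fun _ => (0 : ℝ)) := by
      have hmem : ∀ᵐ x ∂(volume.restrict (Icc a b)), x ∈ Ioo a b := by
        have hset : {y : ℝ | y ∉ Ioo a b} = (Ioo a b)ᶜ := rfl
        rw [ae_iff, hset, Measure.restrict_apply measurableSet_Ioo.compl]
        rw [Set.inter_comm, ← Set.diff_eq]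
        exact hnull
      filter_upwards [hmem] with x hx
      exact hderiv0 x hx
    have hio : IntegrableOn (deriv g) (Icc a b) volume :=
      (integrable_zero _ _ _).congr haeq.symm
    exact hni ((intervalIntegrable_iff_integrableOn_Icc_of_le hab).2 hio)
  -- Step B : nonnegativity of `deriv g` on `(x₀, ∞)`
  have hpos : ∀ x, x₀ < x → 0 ≤ deriv g x := by
    intro x hx
    by_cases hd : DifferentiableAt ℝ g x
    · have hslope : Tendsto (slope g x) (nhdsWithin x {x}ᶜ) (nhds (deriv g x)) :=
        hasDerivAt_iff_tendsto_slope.1 hd.hasDerivAt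
      have hslope' : Tendsto (slope g x) (nhdsWithin x (Ioi x)) (nhds (deriv g x)) :=
        hslope.mono_left (nhdsWithin_mono x (fun y hy => ne_of_gt hy))
      refine ge_of_tendsto hslope' ?_
      filter_upwards [self_mem_nhdsWithin] with y hy
      have hxy : x < y := hy
      have hle : g x ≤ g y := hmono hx.le (hx.le.trans hxy.le) hxy.le
      rw [slope_def_field]
      apply div_nonneg (by linarith) (by linarith)
    · simp [deriv_zero_of_not_differentiableAt hd]
  -- the level points
  set S : ℕ → Set ℝ := fun n => {x | x₁ ≤ x ∧ (2 : ℝ) ^ (n : ℝ) ≤ g x} with hS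
  have hSne : ∀ n, (S n).Nonempty := by
    intro n
    obtain ⟨d, hd⟩ := eventually_atTop.1 (htop.eventually (eventually_ge_atTop ((2:ℝ) ^ (n:ℝ))))
    exact ⟨max x₁ d, le_max_left _ _, hd _ (le_max_right _ _)⟩
  have hSbdd : ∀ n, BddBelow (S n) := fun n => ⟨x₁, fun x hx => hx.1⟩
  set t : ℕ → ℝ := fun n => sInf (S n) with ht
  have ht_ge : ∀ n, x₁ ≤ t n := fun n => le_csInf (hSne n) fun x hx => hx.1
  have ht_le : ∀ (n : ℕ) (x : ℝ), x₁ ≤ x → (2 : ℝ) ^ (n : ℝ) ≤ g x → t n ≤ x :=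
    fun n x h1 h2 => csInf_le (hSbdd n) ⟨h1, h2⟩
  have ht_ub : ∀ (n : ℕ) (x : ℝ), x₁ ≤ x → g x < (2 : ℝ) ^ (n : ℝ) → x ≤ t n := by
    intro n x h1 h2
    refine le_csInf (hSne n) fun s hs => ?_
    by_contra hlt
    push_neg at hlt
    have : g s ≤ g x :=
      hmono (le_trans hx₁0.le hs.1) (le_trans hx₁0.le h1) hlt.le
    linarith [hs.2]
  have hglb : ∀ (n : ℕ) (x : ℝ), t n < x → (2 : ℝ) ^ (n : ℝ) ≤ g x := by
    intro n x hx
    obtain ⟨s, hsS, hsx⟩ := exists_lt_of_csInf_lt (hSne n) hx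
    exact le_trans hsS.2
      (hmono (le_trans hx₁0.le hsS.1) (le_trans hx₁0.le (hsS.1.trans hsx.le)) hsx.le)
  have ht_mono : ∀ n, t n ≤ t (n + 1) := by
    intro n
    refine csInf_le_csInf (hSbdd n) (hSne (n + 1)) fun x hx => ⟨hx.1, le_trans ?_ hx.2⟩
    apply Real.rpow_le_rpow_of_exponent_le one_le_two
    push_cast; linarith
  -- covering
  have hcover : E ⊆ Icc x₀ x₁ ∪ ⋃ n : ℕ, (E ∩ Icc (t n) (t (n + 1))) := by
    intro x hx
    rcases le_or_gt x x₁ with h | h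
    · exact Or.inl ⟨hx.1, h⟩
    · refine Or.inr (mem_iUnion.2 ?_)
      have h1 : 1 ≤ g x := hx₁g x h.le
      have hgx0 : (0 : ℝ) < g x := by linarith
      set n := ⌊Real.logb 2 (g x)⌋₊ with hn
      have hlog0 : 0 ≤ Real.logb 2 (g x) := Real.logb_nonneg one_lt_two h1
      have hlb : (2 : ℝ) ^ (n : ℝ) ≤ g x := by
        calc (2 : ℝ) ^ (n : ℝ) ≤ (2 : ℝ) ^ (Real.logb 2 (g x)) :=
              Real.rpow_le_rpow_of_exponent_le one_le_two (Nat.floor_le hlog0)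
          _ = g x := Real.rpow_logb two_pos (by norm_num) hgx0
      have hub : g x < (2 : ℝ) ^ (((n + 1 : ℕ)) : ℝ) := by
        have : Real.logb 2 (g x) < ((n + 1 : ℕ) : ℝ) := by
          push_cast; exact Nat.lt_floor_add_one _
        calc g x = (2 : ℝ) ^ (Real.logb 2 (g x)) :=
              (Real.rpow_logb two_pos (by norm_num) hgx0).symm
          _ < (2 : ℝ) ^ (((n + 1 : ℕ)) : ℝ) :=
              Real.rpow_lt_rpow_of_exponent_lt one_lt_two this
      exact ⟨n, hx, ht_le n x h.le hlb, ht_ub (n + 1) x h.le hub⟩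
  -- per-piece bound
  have key : ∀ n : ℕ, volume (E ∩ Icc (t n) (t (n + 1)))
      ≤ ENNReal.ofReal (((2 : ℝ) ^ (-δ)) ^ n) := by
    intro n
    set a := t n
    set b := t (n + 1)
    have hab : a ≤ b := ht_mono n
    set cthr : ℝ := ((2 : ℝ) ^ (n : ℝ)) ^ (1 + δ) with hcthr
    have h2n_pos : (0 : ℝ) < (2 : ℝ) ^ (n : ℝ) := Real.rpow_pos_of_pos two_pos _
    have hcthr_pos : 0 < cthr := Real.rpow_pos_of_pos h2n_pos _
    set C : Set ℝ := {x | cthr ≤ deriv g x} ∩ Ioo a b with hC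
    have hsub : E ∩ Icc a b ⊆ C ∪ {a, b} := by
      rintro x ⟨hxE, hxI⟩
      rcases eq_or_lt_of_le hxI.1 with h | h
      · exact Or.inr (Or.inl h.symm)
      rcases eq_or_lt_of_le hxI.2 with h' | h'
      · exact Or.inr (Or.inr h')
      refine Or.inl ⟨?_, h, h'⟩
      have hgx : (2 : ℝ) ^ (n : ℝ) ≤ g x := hglb n x h
      have : cthr ≤ g x ^ (1 + δ) :=
        Real.rpow_le_rpow h2n_pos.le hgx (by positivity)
      exact le_trans this hxE.2.2.le
    -- Chebyshev
    have hmeas : Measurable fun x => ENNReal.ofReal (deriv g x) :=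
      (measurable_deriv g).ennreal_ofReal
    set ν : Measure ℝ := volume.withDensity (fun x => ENNReal.ofReal (deriv g x)) with hν
    have hcheb : ENNReal.ofReal cthr * volume C ≤ ν (Ioo a b) := by
      have h1 := mul_meas_ge_le_lintegral₀ (μ := volume.restrict (Ioo a b))
        hmeas.aemeasurable (ENNReal.ofReal cthr)
      have h2 : volume C ≤
          (volume.restrict (Ioo a b)) {x | ENNReal.ofReal cthr ≤ ENNReal.ofReal (deriv g x)} := by
        rw [Measure.restrict_apply (measurableSet_le measurable_const hmeas)]
        exact measure_mono fun x hx => ⟨ENNReal.ofReal_le_ofReal hx.1, hx.2⟩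
      calc ENNReal.ofReal cthr * volume C
          ≤ ENNReal.ofReal cthr *
            (volume.restrict (Ioo a b)) {x | ENNReal.ofReal cthr ≤ ENNReal.ofReal (deriv g x)} :=
            mul_le_mul_right h2 _
        _ ≤ ∫⁻ x, ENNReal.ofReal (deriv g x) ∂(volume.restrict (Ioo a b)) := h1
        _ = ν (Ioo a b) := (withDensity_apply _ measurableSet_Ioo).symm
    -- bound ν (Ioo a b)
    have hνbound : ν (Ioo a b) ≤ ENNReal.ofReal ((2 : ℝ) ^ (n : ℝ)) := by
      have hIcc : ∀ k : ℕ, ν (Icc (a + 1 / (k + 1)) (b - 1 / (k + 1)))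
          ≤ ENNReal.ofReal ((2 : ℝ) ^ (n : ℝ)) := by
        intro k
        set s := a + 1 / ((k : ℝ) + 1) with hs
        set u := b - 1 / ((k : ℝ) + 1) with hu
        have hk : (0 : ℝ) < 1 / ((k : ℝ) + 1) := by positivity
        rcases le_or_gt s u with hsu | hsu
        · have has : a < s := by simp only [hs]; linarith
          have hub' : u < b := by simp only [hu]; linarith
          have hx₀s : x₀ < s := lt_of_lt_of_le hx₁0 (le_trans (ht_ge n) (le_of_lt has))
          have hint : IntegrableOn (deriv g) (Icc s u) volume :=
            (intervalIntegrable_iff_integrableOn_Icc_of_le hsu).1 (hInt s u hx₀s.le hsu)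
          have hnn : (fun _ => (0:ℝ)) ≤ᵐ[volume.restrict (Icc s u)] deriv g := by
            refine (ae_restrict_iff' measurableSet_Icc).2 (ae_of_all _ fun x hx => ?_)
            exact hpos x (lt_of_lt_of_le hx₀s hx.1)
          have hcalc : ν (Icc s u) = ENNReal.ofReal (∫ x in Icc s u, deriv g x) := by
            rw [withDensity_apply _ measurableSet_Icc,
              ← ofReal_integral_eq_lintegral_ofReal hint hnn]
          rw [hcalc]
          apply ENNReal.ofReal_le_ofReal
          have hieq : ∫ x in Icc s u, deriv g x = g u - g s := by
            rw [MeasureTheory.integral_Icc_eq_integral_Ioc,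
              ← intervalIntegral.integral_of_le hsu, ← hAC s u hx₀s.le hsu]
          rw [hieq]
          have hgs : (2 : ℝ) ^ (n : ℝ) ≤ g s := hglb n s has
          have hgu : g u < (2 : ℝ) ^ (((n + 1 : ℕ)) : ℝ) := by
            by_contra hge
            push_neg at hge
            have := ht_le (n + 1) u (le_trans (ht_ge n) (le_of_lt (lt_of_lt_of_le has hsu))) hge
            exact absurd this (not_le.2 hub')
          have h2exp : (2 : ℝ) ^ (((n + 1 : ℕ)) : ℝ) = 2 * (2 : ℝ) ^ (n : ℝ) := by
            push_cast
            rw [Real.rpow_add two_pos, Real.rpow_one]; ring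
          rw [h2exp] at hgu
          linarith
        · rw [show Icc s u = (∅ : Set ℝ) from Icc_eq_empty (not_le.2 hsu)]
          simp
      have hIooU : Ioo a b = ⋃ k : ℕ, Icc (a + 1 / (k + 1)) (b - 1 / (k + 1)) := by
        ext x
        simp only [mem_Ioo, mem_iUnion, mem_Icc]
        constructor
        · rintro ⟨h1, h2⟩
          obtain ⟨k, hk⟩ := exists_nat_one_div_lt (lt_min (sub_pos.2 h1) (sub_pos.2 h2))
          refine ⟨k, ?_, ?_⟩
          · have := lt_of_lt_of_le hk (min_le_left _ _); linarith
          · have := lt_of_lt_of_le hk (min_le_right _ _); linarith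
        · rintro ⟨k, h1, h2⟩
          have hk : (0 : ℝ) < 1 / ((k : ℝ) + 1) := by positivity
          constructor <;> linarith
      have hmonoI : Monotone fun k : ℕ => Icc (a + 1 / ((k : ℝ) + 1)) (b - 1 / ((k : ℝ) + 1)) := by
        intro i j hij
        have h1 : 1 / ((j : ℝ) + 1) ≤ 1 / ((i : ℝ) + 1) := by
          apply one_div_le_one_div_of_le (by positivity)
          exact_mod_cast add_le_add_left (Nat.cast_le.2 hij) 1
        exact Icc_subset_Icc (by linarith) (by linarith)
      rw [hIooU, hmonoI.measure_iUnion]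
      exact iSup_le hIcc
    -- combine
    have hCbound : volume C ≤ ENNReal.ofReal (((2 : ℝ) ^ (-δ)) ^ n) := by
      have h1 : volume C ≤ ENNReal.ofReal ((2 : ℝ) ^ (n : ℝ)) / ENNReal.ofReal cthr := by
        rw [ENNReal.le_div_iff_mul_le
          (Or.inl (by simp [ENNReal.ofReal_eq_zero, not_le, hcthr_pos]))
          (Or.inl ENNReal.ofReal_ne_top)]
        rw [mul_comm]
        exact le_trans hcheb hνbound
      have h2 : ENNReal.ofReal ((2 : ℝ) ^ (n : ℝ)) / ENNReal.ofReal cthr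
          = ENNReal.ofReal ((2 : ℝ) ^ (n : ℝ) / cthr) :=
        (ENNReal.ofReal_div_of_pos hcthr_pos).symm
      have h3 : (2 : ℝ) ^ (n : ℝ) / cthr = ((2 : ℝ) ^ (-δ)) ^ n := by
        rw [hcthr, ← Real.rpow_natCast ((2:ℝ) ^ (-δ)) n, ← Real.rpow_mul (by norm_num : (0:ℝ) ≤ 2),
          ← Real.rpow_mul (by norm_num : (0:ℝ) ≤ 2), ← Real.rpow_sub two_pos]
        congr 1
        ring
      rw [h2, h3] at h1
      exact h1
    calc volume (E ∩ Icc a b) ≤ volume (C ∪ {a, b}) := measure_mono hsub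
      _ ≤ volume C + volume ({a, b} : Set ℝ) := measure_union_le _ _
      _ = volume C := by
          rw [Set.Countable.measure_zero ((Set.countable_singleton b).insert a) volume, add_zero]
      _ ≤ ENNReal.ofReal (((2 : ℝ) ^ (-δ)) ^ n) := hCbound
  -- sum up
  have hsum : volume E ≤ volume (Icc x₀ x₁) + ∑' n : ℕ, ENNReal.ofReal (((2 : ℝ) ^ (-δ)) ^ n) := by
    calc volume E ≤ volume (Icc x₀ x₁ ∪ ⋃ n : ℕ, (E ∩ Icc (t n) (t (n + 1)))) :=
          measure_mono hcover
      _ ≤ volume (Icc x₀ x₁) + volume (⋃ n : ℕ, (E ∩ Icc (t n) (t (n + 1)))) :=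
          measure_union_le _ _
      _ ≤ volume (Icc x₀ x₁) + ∑' n : ℕ, volume (E ∩ Icc (t n) (t (n + 1))) := by
          gcongr
          exact measure_iUnion_le _
      _ ≤ volume (Icc x₀ x₁) + ∑' n : ℕ, ENNReal.ofReal (((2 : ℝ) ^ (-δ)) ^ n) := by
          gcongr with n
          exact key n
  have hgeom : ∑' n : ℕ, ENNReal.ofReal (((2 : ℝ) ^ (-δ)) ^ n) < ⊤ := by
    have hr : ENNReal.ofReal ((2 : ℝ) ^ (-δ)) < 1 := by
      rw [← ENNReal.ofReal_one]
      exact ENNReal.ofReal_lt_ofReal_iff_of_nonneg (Real.rpow_pos_of_pos two_pos _).le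
        |>.2 (Real.rpow_lt_one_of_one_lt_of_neg one_lt_two (neg_neg_iff_pos.2 hδ))
    have heq : ∀ n : ℕ, ENNReal.ofReal (((2 : ℝ) ^ (-δ)) ^ n)
        = (ENNReal.ofReal ((2 : ℝ) ^ (-δ))) ^ n := fun n =>
      ENNReal.ofReal_pow (Real.rpow_pos_of_pos two_pos _).le n
    simp_rw [heq]
    rw [ENNReal.tsum_geometric]
    rw [ENNReal.inv_lt_top]
    exact tsub_pos_of_lt hr
  exact lt_of_le_of_lt hsum (ENNReal.add_lt_top.2 ⟨measure_Icc_lt_top, hgeom⟩)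
end

section
/- Let α : [x₀,∞) → (0,∞) be decreasing and continuous, and let β : (0,1] → (0,∞) be increasing and continuous. Then there exists a decreasing, continuous function φ : [x₀,∞) → (0,1] such that φ(x + α(x)) ≤ β(φ(x)) for all sufficiently large x. -/
open Set Filter MeasureTheory intervalIntegral

namespace Stmt4Aux

noncomputable def dseq (β : ℝ → ℝ) : ℕ → ℝ
  | 0 => 1
  | n+1 => min (dseq β n) (β (dseq β n))

variable {β : ℝ → ℝ}

lemma dseq_mem (hβpos : ∀ t ∈ Set.Ioc (0:ℝ) 1, 0 < β t) :
    ∀ n, dseq β n ∈ Set.Ioc (0:ℝ) 1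
  | 0 => by simp [dseq]
  | n+1 => by
    have h := dseq_mem hβpos n
    exact ⟨lt_min h.1 (hβpos _ h), (min_le_left _ _).trans h.2⟩

lemma dseq_succ_le (n : ℕ) : dseq β (n+1) ≤ dseq β n := min_le_left _ _

lemma dseq_succ_le_beta (n : ℕ) : dseq β (n+1) ≤ β (dseq β n) := min_le_right _ _

noncomputable def rfun (β : ℝ → ℝ) (t : ℝ) : ℝ := dseq β ⌊t⌋₊ - dseq β (⌊t⌋₊ + 1)

lemma rfun_nonneg (t : ℝ) : 0 ≤ rfun β t := sub_nonneg.2 (dseq_succ_le _)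

lemma dseq_antitone : Antitone (dseq β) :=
  antitone_nat_of_succ_le dseq_succ_le

lemma rfun_le_one (hβpos : ∀ t ∈ Set.Ioc (0:ℝ) 1, 0 < β t) (t : ℝ) : rfun β t ≤ 1 := by
  have h1 := (dseq_mem hβpos ⌊t⌋₊).2
  have h2 := (dseq_mem hβpos (⌊t⌋₊ + 1)).1
  unfold rfun; linarith

lemma rfun_intable (hβpos : ∀ t ∈ Set.Ioc (0:ℝ) 1, 0 < β t) (a b : ℝ) :
    IntervalIntegrable (rfun β) volume a b := by
  have hm : Measurable (rfun β) :=
    (measurable_from_nat (f := fun n => dseq β n - dseq β (n+1))).comp Nat.measurable_floor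
  rw [intervalIntegrable_iff]
  refine Measure.integrableOn_of_bounded (M := 1) measure_Ioc_lt_top.ne
    hm.aestronglyMeasurable (ae_of_all _ fun t => ?_)
  rw [Real.norm_eq_abs, abs_le]
  exact ⟨by linarith [rfun_nonneg (β := β) t], rfun_le_one hβpos t⟩

noncomputable def cfun (β : ℝ → ℝ) (s : ℝ) : ℝ := 1 - ∫ t in (0:ℝ)..s, rfun β t

lemma cfun_cont (hβpos : ∀ t ∈ Set.Ioc (0:ℝ) 1, 0 < β t) : Continuous (cfun β) :=
  continuous_const.sub (intervalIntegral.continuous_primitive (rfun_intable hβpos) 0)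

lemma cfun_anti (hβpos : ∀ t ∈ Set.Ioc (0:ℝ) 1, 0 < β t) : Antitone (cfun β) := by
  intro a b hab
  have := integral_interval_sub_left (rfun_intable hβpos 0 b) (rfun_intable hβpos 0 a)
  have hnn : (0:ℝ) ≤ ∫ t in a..b, rfun β t :=
    intervalIntegral.integral_nonneg hab (fun u _ => rfun_nonneg u)
  unfold cfun; linarith

lemma cfun_nat (hβpos : ∀ t ∈ Set.Ioc (0:ℝ) 1, 0 < β t) (n : ℕ) :
    cfun β (n : ℝ) = dseq β n := by
  induction n with
  | zero => simp [cfun, dseq]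
  | succ n ih =>
    have hstep : (∫ t in (n:ℝ)..(n+1:ℝ), rfun β t) = dseq β n - dseq β (n+1) := by
      have hae : ∀ᵐ t : ℝ, t ∈ Set.uIoc (n:ℝ) ((n:ℝ)+1) →
          rfun β t = dseq β n - dseq β (n+1) := by
        have hne : ∀ᵐ t : ℝ, t ≠ (n:ℝ)+1 := by
          rw [ae_iff]
          simp only [ne_eq, not_not, Set.setOf_eq_eq_singleton]
          exact Real.volume_singleton
        filter_upwards [hne] with t ht hmem
        rw [Set.uIoc_of_le (by linarith)] at hmem
        have hfl : ⌊t⌋₊ = n := by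
          have h0 : (0:ℝ) ≤ t := le_trans (Nat.cast_nonneg n) hmem.1.le
          rw [Nat.floor_eq_iff h0]
          exact ⟨hmem.1.le, lt_of_le_of_ne (by push_cast; linarith [hmem.2]) (by
            push_cast; exact fun h => ht (by linarith))⟩
        simp [rfun, hfl]
      rw [intervalIntegral.integral_congr_ae hae, intervalIntegral.integral_const]
      simp
    have hsub := integral_interval_sub_left (rfun_intable hβpos 0 ((n:ℝ)+1))
      (rfun_intable hβpos 0 (n:ℝ))
    unfold cfun at *
    push_cast
    rw [hstep] at hsub
    linarith

lemma cfun_pos (hβpos : ∀ t ∈ Set.Ioc (0:ℝ) 1, 0 < β t) (s : ℝ) : 0 < cfun β s := by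
  have h1 : cfun β s ≥ cfun β ((⌊s⌋₊ + 1 : ℕ) : ℝ) := by
    apply cfun_anti hβpos
    push_cast
    exact (Nat.lt_floor_add_one s).le
  rw [cfun_nat hβpos] at h1
  exact lt_of_lt_of_le (dseq_mem hβpos _).1 h1

lemma cfun_le_one (hβpos : ∀ t ∈ Set.Ioc (0:ℝ) 1, 0 < β t) {s : ℝ} (hs : 0 ≤ s) :
    cfun β s ≤ 1 := by
  have := cfun_anti hβpos hs
  rwa [show cfun β 0 = 1 by simpa [dseq] using cfun_nat hβpos 0] at this

lemma cfun_key (hβpos : ∀ t ∈ Set.Ioc (0:ℝ) 1, 0 < β t)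
    (hβmono : MonotoneOn β (Set.Ioc (0:ℝ) 1)) {s : ℝ} (hs : 0 ≤ s) :
    cfun β (s + 2) ≤ β (cfun β s) := by
  set n := ⌊s⌋₊ with hn
  have hsl : (n : ℝ) ≤ s := Nat.floor_le hs
  have hsu : s < (n : ℝ) + 1 := Nat.lt_floor_add_one s
  have hcs_le : cfun β s ≤ 1 := cfun_le_one hβpos hs
  have hcs_pos : 0 < cfun β s := cfun_pos hβpos s
  have hlow : dseq β (n+1) ≤ cfun β s := by
    have := cfun_anti hβpos (show s ≤ ((n+1 : ℕ) : ℝ) by push_cast; linarith)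
    rwa [cfun_nat hβpos] at this
  have h2 : cfun β (s + 2) ≤ dseq β (n+2) := by
    have := cfun_anti hβpos (show ((n+2 : ℕ) : ℝ) ≤ s + 2 by push_cast; linarith)
    rwa [cfun_nat hβpos] at this
  have h3 : dseq β (n+2) ≤ β (dseq β (n+1)) := dseq_succ_le_beta (n+1)
  have h4 : β (dseq β (n+1)) ≤ β (cfun β s) :=
    hβmono (dseq_mem hβpos (n+1)) ⟨hcs_pos, hcs_le⟩ hlow
  linarith

end Stmt4Aux

open Stmt4Aux

/-- Given `α : [x₀,∞) → (0,∞)` decreasing continuous and `β : (0,1] → (0,∞)` increasing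
continuous, there is a decreasing continuous `φ : [x₀,∞) → (0,1]` with
`φ(x + α(x)) ≤ β(φ(x))` for all large `x`. -/
theorem stmt4 (x₀ : ℝ) (α β : ℝ → ℝ)
    (hαpos : ∀ x ∈ Set.Ici x₀, 0 < α x)
    (hαanti : AntitoneOn α (Set.Ici x₀))
    (hαcont : ContinuousOn α (Set.Ici x₀))
    (hβpos : ∀ t ∈ Set.Ioc (0:ℝ) 1, 0 < β t)
    (hβmono : MonotoneOn β (Set.Ioc (0:ℝ) 1))
    (hβcont : ContinuousOn β (Set.Ioc (0:ℝ) 1)) :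
    ∃ φ : ℝ → ℝ, AntitoneOn φ (Set.Ici x₀) ∧ ContinuousOn φ (Set.Ici x₀) ∧
      (∀ x ∈ Set.Ici x₀, φ x ∈ Set.Ioc (0:ℝ) 1) ∧
      ∃ x₁ : ℝ, ∀ x ≥ x₁, φ (x + α x) ≤ β (φ x) := by
  set f : ℝ → ℝ := fun t => 2 / α (max t x₀) with hf_def
  have hf : Continuous f := by
    apply ContinuousOn.comp_continuous
      (g := fun y => 2 / α y) (s := Set.Ici x₀)
      (continuousOn_const.div hαcont (fun y hy => (hαpos y hy).ne'))
      (continuous_id.max continuous_const)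
    exact fun t => le_max_right t x₀
  have hfpos : ∀ t, 0 < f t := fun t => div_pos two_pos (hαpos _ (le_max_right t x₀))
  have hfeq : ∀ t ≥ x₀, f t = 2 / α t := fun t ht => by
    simp [hf_def, max_eq_left ht]
  have hfint : ∀ a b : ℝ, IntervalIntegrable f volume a b :=
    fun a b => hf.intervalIntegrable a b
  set N : ℝ → ℝ := fun x => ∫ t in x₀..x, f t with hN_def
  have hNcont : Continuous N := intervalIntegral.continuous_primitive hfint x₀
  have hNmono : Monotone N := by
    intro a b hab
    have hsub := integral_interval_sub_left (hfint x₀ b) (hfint x₀ a)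
    have hnn : (0:ℝ) ≤ ∫ t in a..b, f t :=
      intervalIntegral.integral_nonneg hab (fun u _ => (hfpos u).le)
    simp only [hN_def]
    linarith
  have hN0 : N x₀ = 0 := intervalIntegral.integral_same
  have hNkey : ∀ x ≥ x₀, N x + 2 ≤ N (x + α x) := by
    intro x hx
    have hαx : 0 < α x := hαpos x hx
    have hle : x ≤ x + α x := by linarith
    have hmono : (∫ t in x..(x + α x), (fun _ => 2 / α x) t) ≤ ∫ t in x..(x + α x), f t := by
      apply intervalIntegral.integral_mono_on hle (intervalIntegrable_const) (hfint x _)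
      intro t ht
      have htx : x₀ ≤ t := le_trans hx ht.1
      rw [hfeq t htx]
      have hαt : 0 < α t := hαpos t htx
      have : α t ≤ α x := hαanti hx htx ht.1
      gcongr
    rw [intervalIntegral.integral_const, smul_eq_mul] at hmono
    have hconst : (x + α x - x) * (2 / α x) = 2 := by
      field_simp
      ring
    rw [hconst] at hmono
    have hsub := integral_interval_sub_left (hfint x₀ (x + α x)) (hfint x₀ x)
    simp only [hN_def]
    linarith
  refine ⟨fun x => cfun β (N x), ?_, ?_, ?_, x₀, ?_⟩
  · intro a _ b _ hab
    exact cfun_anti hβpos (hNmono hab)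
  · exact ((cfun_cont hβpos).comp hNcont).continuousOn
  · intro x hx
    have hN0x : 0 ≤ N x := by rw [← hN0]; exact hNmono hx
    exact ⟨cfun_pos hβpos _, cfun_le_one hβpos hN0x⟩
  · intro x hx
    have hN0x : 0 ≤ N x := by rw [← hN0]; exact hNmono hx
    calc cfun β (N (x + α x)) ≤ cfun β (N x + 2) := cfun_anti hβpos (hNkey x hx)
      _ ≤ β (cfun β (N x)) := cfun_key hβpos hβmono hN0x
end

section
/- Let K ⊆ ℝⁿ be bounded and r : K → (0,∞). Then there exists an at most countable subset L ⊆ K such that K ⊆ ⋃_{x∈L} B(x,r(x)) and no point of ℝⁿ is contained in more than 4^{2n} of the balls B(x,r(x)) for x ∈ L. -/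
open Set Metric

/-- Besicovich covering lemma with multiplicity constant `4^{2n}`: for a bounded `K ⊆ ℝⁿ`
and a radius function `r : K → (0,∞)` there is an at most countable `L ⊆ K` with
`K ⊆ ⋃_{x∈L} B(x,r(x))` such that no point lies in more than `4^{2n}` of these balls. -/
theorem stmt6 (n : ℕ) (K : Set (EuclideanSpace ℝ (Fin n))) (hK : Bornology.IsBounded K)
    (r : EuclideanSpace ℝ (Fin n) → ℝ) (hr : ∀ x ∈ K, 0 < r x) :
    ∃ L ⊆ K, L.Countable ∧ (K ⊆ ⋃ x ∈ L, Metric.ball x (r x)) ∧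
      ∀ y : EuclideanSpace ℝ (Fin n),
        ({x ∈ L | y ∈ Metric.ball x (r x)}).encard ≤ 4 ^ (2 * n) := by
  classical
  obtain ⟨C, hC⟩ := Metric.isBounded_iff.1 hK
  -- key constant bound
  have hNle : (Besicovitch.multiplicity (EuclideanSpace ℝ (Fin n)) : ℕ∞) ≤ 4 ^ (2 * n) := by
    have h1 : Besicovitch.multiplicity (EuclideanSpace ℝ (Fin n)) ≤ 5 ^ Module.finrank ℝ (EuclideanSpace ℝ (Fin n)) :=
      Besicovitch.multiplicity_le (E := EuclideanSpace ℝ (Fin n))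
    have h2 : Module.finrank ℝ (EuclideanSpace ℝ (Fin n)) = n := by
      simp [finrank_euclideanSpace]
    have h3 : (5 : ℕ) ^ n ≤ 4 ^ (2 * n) := by
      calc (5:ℕ) ^ n ≤ 16 ^ n := Nat.pow_le_pow_left (by norm_num) n
        _ = 4 ^ (2 * n) := by rw [pow_mul]; norm_num
    rw [h2] at h1
    exact_mod_cast h1.trans h3
  by_cases hbig : ∃ x ∈ K, C < r x
  · obtain ⟨x, hxK, hx⟩ := hbig
    refine ⟨{x}, by simpa using hxK, countable_singleton x, ?_, ?_⟩
    · intro y hy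
      simp only [mem_iUnion, mem_singleton_iff]
      exact ⟨x, rfl, by simpa using lt_of_le_of_lt (hC hy hxK) hx⟩
    · intro y
      refine le_trans (Set.encard_le_encard (by intro z hz; exact hz.1)) ?_
      rw [Set.encard_singleton]
      exact one_le_pow₀ (by norm_num : (1:ℕ∞) ≤ 4)
  · push_neg at hbig
    rcases K.eq_empty_or_nonempty with hKe | hKne
    · exact ⟨∅, by simp, countable_empty, by simp [hKe], by simp⟩
    have hCpos : 0 < C := lt_of_lt_of_le (hr _ hKne.choose_spec) (hbig _ hKne.choose_spec)
    set q : Besicovitch.BallPackage K (EuclideanSpace ℝ (Fin n)) :=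
      { c := fun j => (j : EuclideanSpace ℝ (Fin n))
        r := fun j => r j
        rpos := fun j => hr j j.2
        r_bound := C
        r_le := fun j => hbig j j.2 }
    obtain ⟨s, hdisj, hcov⟩ := Besicovitch.exist_disjoint_covering_families
      (Besicovitch.one_lt_goodτ _) (Besicovitch.isEmpty_satelliteConfig_multiplicity _) q
    refine ⟨⋃ i : Fin (Besicovitch.multiplicity (EuclideanSpace ℝ (Fin n))), Subtype.val '' s i, ?_, ?_, ?_, ?_⟩
    · rintro x hx
      simp only [mem_iUnion, mem_image] at hx
      obtain ⟨i, j, _, rfl⟩ := hx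
      exact j.2
    · refine countable_iUnion fun i => Countable.image ?_ _
      refine (hdisj i).countable_of_nonempty_interior fun j hj => ?_
      rw [interior_closedBall _ (q.rpos j).ne']
      exact ⟨j, mem_ball_self (q.rpos j)⟩
    · intro x hx
      have : x ∈ range q.c := ⟨⟨x, hx⟩, rfl⟩
      obtain ⟨i, hi⟩ := mem_iUnion.1 (hcov this)
      simp only [mem_iUnion] at hi ⊢
      obtain ⟨j, hj, hjx⟩ := hi
      exact ⟨(j : EuclideanSpace ℝ (Fin n)), ⟨i, mem_image_of_mem _ hj⟩, hjx⟩
    · intro y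
      set T := {x ∈ ⋃ i : Fin (Besicovitch.multiplicity (EuclideanSpace ℝ (Fin n))), Subtype.val '' s i | y ∈ ball x (r x)}
      have hchoice : ∀ x ∈ T, ∃ i : Fin (Besicovitch.multiplicity (EuclideanSpace ℝ (Fin n))), ∃ j ∈ s i, (j : EuclideanSpace ℝ (Fin n)) = x := by
        intro x hx
        obtain ⟨hx1, _⟩ := hx
        simp only [mem_iUnion, mem_image] at hx1
        obtain ⟨i, j, hj, hjx⟩ := hx1
        exact ⟨i, j, hj, hjx⟩
      choose f hf using hchoice
      have hinj : Set.InjOn (fun x : T => f x x.2) Set.univ := by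
        intro ⟨x₁, hx₁⟩ _ ⟨x₂, hx₂⟩ _ heq
        simp only at heq
        obtain ⟨j₁, hj₁, hj₁x⟩ := hf x₁ hx₁
        obtain ⟨j₂, hj₂, hj₂x⟩ := hf x₂ hx₂
        rw [heq] at hj₁
        have hy₁ : y ∈ closedBall (q.c j₁) (q.r j₁) := by
          have := hx₁.2; rw [← hj₁x] at this
          exact ball_subset_closedBall this
        have hy₂ : y ∈ closedBall (q.c j₂) (q.r j₂) := by
          have := hx₂.2; rw [← hj₂x] at this
          exact ball_subset_closedBall this
        have : j₁ = j₂ :=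
          (hdisj (f x₂ hx₂)).elim hj₁ hj₂ (not_disjoint_iff.2 ⟨y, hy₁, hy₂⟩)
        subst this
        exact Subtype.ext (hj₁x ▸ hj₂x)
      calc T.encard = (Set.univ : Set T).encard := by rw [Set.encard_univ, ENat.card_coe_set_eq]
        _ = ((fun x : T => f x x.2) '' Set.univ).encard := (hinj.encard_image).symm
        _ ≤ (Set.univ : Set (Fin (Besicovitch.multiplicity (EuclideanSpace ℝ (Fin n))))).encard := Set.encard_le_encard (subset_univ _)
        _ = (Besicovitch.multiplicity (EuclideanSpace ℝ (Fin n)) : ℕ∞) := by rw [Set.encard_univ]; simp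
        _ ≤ 4 ^ (2 * n) := hNle
end

section
/- Let D ⊆ ℂ be compact and let T₁,…,T_m : D → D be contractions such that T_i(D) ∩ T_j(D) = ∅ for i ≠ j, and suppose that for each i there is b_i ∈ (0,1) with |T_i(z) − T_i(w)| ≥ b_i|z − w| for all z,w ∈ D. Define s > 0 by Σ_{i=1}^m b_i^s = 1. Then the limit set X of the iterated function scheme {T₁,…,T_m} satisfies dim X ≥ s, where dim denotes Hausdorff dimension. -/
open MeasureTheory Set Metric Filter Topology ENNReal

namespace Stmt7Aux

variable {m : ℕ}

/-- Composition of the maps along a word. -/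
def Tw (T : Fin m → ℂ → ℂ) : List (Fin m) → ℂ → ℂ
  | [] => id
  | i :: w => T i ∘ Tw T w

/-- Product of weights along a word. -/
def bw (b : Fin m → ℝ) (w : List (Fin m)) : ℝ := (w.map b).prod

@[simp] lemma bw_nil (b : Fin m → ℝ) : bw b [] = 1 := rfl

@[simp] lemma bw_cons (b : Fin m → ℝ) (i : Fin m) (w : List (Fin m)) :
    bw b (i :: w) = b i * bw b w := by simp [bw]

lemma bw_pos {b : Fin m → ℝ} (hb : ∀ i, 0 < b i) (w : List (Fin m)) : 0 < bw b w := by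
  induction w with
  | nil => norm_num
  | cons i t ih => simpa using mul_pos (hb i) ih

lemma bw_nonneg {b : Fin m → ℝ} (h0 : ∀ i, 0 ≤ b i) (w : List (Fin m)) : 0 ≤ bw b w := by
  induction w with
  | nil => norm_num
  | cons i t ih => simpa using mul_nonneg (h0 i) ih

lemma bw_le_pow {b : Fin m → ℝ} {M : ℝ} (hM : 0 ≤ M) (h0 : ∀ i, 0 ≤ b i)
    (h : ∀ i, b i ≤ M) (w : List (Fin m)) : bw b w ≤ M ^ w.length := by
  induction w with
  | nil => simp
  | cons i t ih =>
    simp only [bw_cons, List.length_cons, pow_succ]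
    rw [mul_comm (M ^ t.length) M]
    exact mul_le_mul (h i) ih (bw_nonneg h0 t) hM

lemma bw_rpow {b : Fin m → ℝ} (hb : ∀ i, 0 < b i) (s : ℝ) (w : List (Fin m)) :
    bw (fun i => b i ^ s) w = bw b w ^ s := by
  induction w with
  | nil => simp [Real.one_rpow]
  | cons i t ih =>
    simp only [bw_cons, ih]
    rw [← Real.mul_rpow (hb i).le (bw_pos hb t).le]

@[simp] lemma Tw_nil (T : Fin m → ℂ → ℂ) : Tw T [] = id := rfl

@[simp] lemma Tw_cons (T : Fin m → ℂ → ℂ) (i : Fin m) (w : List (Fin m)) :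
    Tw T (i :: w) = T i ∘ Tw T w := rfl

lemma Tw_append (T : Fin m → ℂ → ℂ) (u v : List (Fin m)) :
    Tw T (u ++ v) = Tw T u ∘ Tw T v := by
  induction u with
  | nil => rfl
  | cons i t ih => simp [Tw_cons, ih, Function.comp_assoc]

lemma Tw_mapsTo {T : Fin m → ℂ → ℂ} {D : Set ℂ} (h : ∀ i, Set.MapsTo (T i) D D)
    (w : List (Fin m)) : Set.MapsTo (Tw T w) D D := by
  induction w with
  | nil => exact Set.mapsTo_id D
  | cons i t ih => exact (h i).comp ih

lemma Tw_dist_le {T : Fin m → ℂ → ℂ} {D : Set ℂ} {c : Fin m → ℝ}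
    (hmaps : ∀ i, Set.MapsTo (T i) D D) (hc0 : ∀ i, 0 ≤ c i)
    (hc : ∀ i, ∀ z ∈ D, ∀ w ∈ D, dist (T i z) (T i w) ≤ c i * dist z w)
    (w : List (Fin m)) : ∀ z ∈ D, ∀ w' ∈ D,
      dist (Tw T w z) (Tw T w w') ≤ bw c w * dist z w' := by
  induction w with
  | nil => intro z _ w' _; simp
  | cons i t ih =>
    intro z hz w' hw'
    have h1 := hc i (Tw T t z) (Tw_mapsTo hmaps t hz) (Tw T t w') (Tw_mapsTo hmaps t hw')
    have h2 := ih z hz w' hw'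
    calc dist (Tw T (i :: t) z) (Tw T (i :: t) w') ≤ c i * dist (Tw T t z) (Tw T t w') := h1
      _ ≤ c i * (bw c t * dist z w') := mul_le_mul_of_nonneg_left h2 (hc0 i)
      _ = bw c (i :: t) * dist z w' := by rw [bw_cons]; ring

lemma Tw_dist_ge {T : Fin m → ℂ → ℂ} {D : Set ℂ} {b : Fin m → ℝ}
    (hmaps : ∀ i, Set.MapsTo (T i) D D)
    (hlow : ∀ i, ∀ z ∈ D, ∀ w ∈ D, b i * dist z w ≤ dist (T i z) (T i w))
    (hb : ∀ i, 0 < b i)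
    (w : List (Fin m)) : ∀ z ∈ D, ∀ w' ∈ D,
      bw b w * dist z w' ≤ dist (Tw T w z) (Tw T w w') := by
  induction w with
  | nil => intro z _ w' _; simp
  | cons i t ih =>
    intro z hz w' hw'
    have h1 := hlow i (Tw T t z) (Tw_mapsTo hmaps t hz) (Tw T t w') (Tw_mapsTo hmaps t hw')
    have h2 := ih z hz w' hw'
    calc bw b (i :: t) * dist z w' = b i * (bw b t * dist z w') := by rw [bw_cons]; ring
      _ ≤ b i * dist (Tw T t z) (Tw T t w') := mul_le_mul_of_nonneg_left h2 (hb i).le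
      _ ≤ dist (Tw T (i :: t) z) (Tw T (i :: t) w') := h1

/-! ### The digit expansion of `[0,1)` adapted to the weights `p` -/

/-- Partial sums of the weights. -/
def qf (p : Fin m → ℝ) (k : ℕ) : ℝ := ∑ i ∈ Finset.univ.filter (fun i : Fin m => (i : ℕ) < k), p i

lemma qf_zero (p : Fin m → ℝ) : qf p 0 = 0 := by simp [qf]

lemma qf_top (p : Fin m → ℝ) : qf p m = ∑ i, p i := by
  unfold qf
  congr 1
  apply Finset.filter_true_of_mem
  intro i _
  exact i.is_lt

lemma qf_mono {p : Fin m → ℝ} (hp : ∀ i, 0 < p i) {k l : ℕ} (h : k ≤ l) :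
    qf p k ≤ qf p l := by
  apply Finset.sum_le_sum_of_subset_of_nonneg
  · intro i hi
    simp only [Finset.mem_filter] at *
    exact ⟨hi.1, lt_of_lt_of_le hi.2 h⟩
  · intro i _ _; exact (hp i).le

lemma qf_succ {p : Fin m → ℝ} (i : Fin m) :
    qf p ((i : ℕ) + 1) = qf p i + p i := by
  have hins : (Finset.univ.filter (fun j : Fin m => (j : ℕ) < (i : ℕ) + 1))
      = insert i (Finset.univ.filter (fun j : Fin m => (j : ℕ) < (i : ℕ))) := by
    ext j
    simp only [Finset.mem_filter, Finset.mem_insert, Finset.mem_univ, true_and]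
    constructor
    · intro hj
      rcases Nat.lt_succ_iff_lt_or_eq.mp hj with h | h
      · exact Or.inr h
      · exact Or.inl (Fin.ext h)
    · rintro (rfl | hj)
      · exact Nat.lt_succ_self _
      · exact Nat.lt_succ_of_lt hj
  unfold qf
  rw [hins, Finset.sum_insert (by simp), add_comm]

lemma qf_nonneg {p : Fin m → ℝ} (hp : ∀ i, 0 < p i) (k : ℕ) : 0 ≤ qf p k := by
  rw [← qf_zero p]; exact qf_mono hp (Nat.zero_le _)

/-- The first digit of `x ∈ [0,1)`. -/
noncomputable def dig (p : Fin m → ℝ) (hm : 0 < m) (x : ℝ) : Fin m :=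
  if h : ∃ i : Fin m, qf p i ≤ x ∧ x < qf p ((i : ℕ) + 1) then h.choose else ⟨0, hm⟩

lemma dig_unique {p : Fin m → ℝ} (hp : ∀ i, 0 < p i) (hm : 0 < m) {x : ℝ} {i : Fin m}
    (h1 : qf p i ≤ x) (h2 : x < qf p ((i : ℕ) + 1)) : dig p hm x = i := by
  have h : ∃ j : Fin m, qf p j ≤ x ∧ x < qf p ((j : ℕ) + 1) := ⟨i, h1, h2⟩
  rw [dig, dif_pos h]
  obtain ⟨hj1, hj2⟩ := h.choose_spec
  set j := h.choose
  rcases lt_trichotomy (j : ℕ) (i : ℕ) with hlt | heq | hgt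
  · exact absurd (lt_of_lt_of_le hj2 (le_trans (qf_mono hp hlt) h1)) (lt_irrefl x)
  · exact Fin.ext heq
  · exact absurd (lt_of_lt_of_le h2 (le_trans (qf_mono hp hgt) hj1)) (lt_irrefl x)

lemma dig_exists {p : Fin m → ℝ} (hp : ∀ i, 0 < p i) (hm : 0 < m) (hps : ∑ i, p i = 1)
    {x : ℝ} (hx : x ∈ Set.Ico (0 : ℝ) 1) :
    ∃ i : Fin m, qf p i ≤ x ∧ x < qf p ((i : ℕ) + 1) := by
  classical
  set A := Finset.univ.filter (fun i : Fin m => qf p i ≤ x) with hA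
  have h0A : (⟨0, hm⟩ : Fin m) ∈ A := by
    simp only [hA, Finset.mem_filter, Finset.mem_univ, true_and]
    simpa [qf_zero] using hx.1
  have hAne : A.Nonempty := ⟨_, h0A⟩
  set i := A.max' hAne with hi
  have hiA : i ∈ A := A.max'_mem hAne
  have h1 : qf p i ≤ x := by
    simpa only [hA, Finset.mem_filter, Finset.mem_univ, true_and] using hiA
  refine ⟨i, h1, ?_⟩
  by_contra hcon
  push_neg at hcon
  have him : (i : ℕ) + 1 < m := by
    rcases lt_or_eq_of_le (Nat.succ_le_of_lt i.is_lt) with h | h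
    · exact h
    · exfalso
      have hq1 : qf p ((i : ℕ) + 1) = 1 := by
        rw [show (i : ℕ) + 1 = m by omega, qf_top, hps]
      have := hx.2
      linarith
  have hjA : (⟨(i : ℕ) + 1, him⟩ : Fin m) ∈ A := by
    simp only [hA, Finset.mem_filter, Finset.mem_univ, true_and]
    exact hcon
  have := A.le_max' _ hjA
  rw [← hi] at this
  exact absurd (show i < (⟨(i : ℕ) + 1, him⟩ : Fin m) from Fin.lt_iff_val_lt_val.mpr (Nat.lt_succ_self _)) (not_lt_of_ge this)

lemma dig_spec {p : Fin m → ℝ} (hp : ∀ i, 0 < p i) (hm : 0 < m) (hps : ∑ i, p i = 1)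
    {x : ℝ} (hx : x ∈ Set.Ico (0 : ℝ) 1) :
    qf p (dig p hm x) ≤ x ∧ x < qf p ((dig p hm x : ℕ) + 1) := by
  have h := dig_exists hp hm hps hx
  rw [dig, dif_pos h]
  exact h.choose_spec

/-- The renormalized remainder map. -/
noncomputable def rmap (p : Fin m → ℝ) (hm : 0 < m) (x : ℝ) : ℝ :=
  (x - qf p (dig p hm x)) / p (dig p hm x)

lemma rmap_mem {p : Fin m → ℝ} (hp : ∀ i, 0 < p i) (hm : 0 < m) (hps : ∑ i, p i = 1)
    {x : ℝ} (hx : x ∈ Set.Ico (0 : ℝ) 1) : rmap p hm x ∈ Set.Ico (0 : ℝ) 1 := by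
  obtain ⟨h1, h2⟩ := dig_spec hp hm hps hx
  have hq := qf_succ (p := p) (dig p hm x)
  have hpi := hp (dig p hm x)
  rw [Set.mem_Ico]
  unfold rmap
  constructor
  · exact div_nonneg (by linarith) hpi.le
  · rw [div_lt_one hpi]
    linarith

/-- The word of the first `n` digits of `x`. -/
noncomputable def word (p : Fin m → ℝ) (hm : 0 < m) : ℕ → ℝ → List (Fin m)
  | 0, _ => []
  | n + 1, x => dig p hm x :: word p hm n (rmap p hm x)

@[simp] lemma word_zero (p : Fin m → ℝ) (hm : 0 < m) (x : ℝ) : word p hm 0 x = [] := rfl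

@[simp] lemma word_succ (p : Fin m → ℝ) (hm : 0 < m) (n : ℕ) (x : ℝ) :
    word p hm (n + 1) x = dig p hm x :: word p hm n (rmap p hm x) := rfl

@[simp] lemma word_length (p : Fin m → ℝ) (hm : 0 < m) (n : ℕ) (x : ℝ) :
    (word p hm n x).length = n := by
  induction n generalizing x with
  | zero => rfl
  | succ k ih => simp [word_succ, ih]

lemma word_add (p : Fin m → ℝ) (hm : 0 < m) (n k : ℕ) (x : ℝ) :
    word p hm (n + k) x = word p hm n x ++ word p hm k ((rmap p hm)^[n] x) := by
  induction n generalizing x with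
  | zero => simp
  | succ j ih =>
    have : j + 1 + k = (j + k) + 1 := by omega
    rw [this, word_succ, word_succ, ih (rmap p hm x), Function.iterate_succ_apply]
    simp

lemma word_take (p : Fin m → ℝ) (hm : 0 < m) {k n : ℕ} (h : k ≤ n) (x : ℝ) :
    (word p hm n x).take k = word p hm k x := by
  obtain ⟨l, rfl⟩ := Nat.exists_eq_add_of_le h
  rw [word_add]
  rw [List.take_append_of_le_length (by simp), List.take_of_length_le (by simp)]

/-- The cylinder set of a word is an interval of length `bw p w`. -/
lemma cylinder_eq {p : Fin m → ℝ} (hp : ∀ i, 0 < p i) (hm : 0 < m) (hps : ∑ i, p i = 1)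
    (w : List (Fin m)) :
    ∃ a : ℝ, 0 ≤ a ∧ a + bw p w ≤ 1 ∧
      {x : ℝ | x ∈ Set.Ico (0 : ℝ) 1 ∧ word p hm w.length x = w} = Set.Ico a (a + bw p w) := by
  induction w with
  | nil =>
    refine ⟨0, le_refl 0, by norm_num, ?_⟩
    ext x
    simp [Set.mem_Ico]
  | cons i t ih =>
    obtain ⟨a, ha0, ha1, hset⟩ := ih
    have hpi := hp i
    have hbt : 0 ≤ bw p t := (bw_pos hp t).le
    have hq0 : 0 ≤ qf p i := qf_nonneg hp _
    have hqs := qf_succ (p := p) i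
    have hq1 : qf p ((i : ℕ) + 1) ≤ 1 := by
      have := qf_mono hp (show (i : ℕ) + 1 ≤ m from i.is_lt)
      rw [qf_top, hps] at this
      exact this
    refine ⟨qf p i + p i * a, by positivity, ?_, ?_⟩
    · have : p i * (a + bw p t) ≤ p i := by
        nlinarith
      rw [bw_cons]
      nlinarith
    · ext x
      simp only [Set.mem_setOf_eq, List.length_cons, word_succ, Set.mem_Ico, bw_cons]
      constructor
      · rintro ⟨⟨hx0, hx1⟩, hw⟩
        have hdi : dig p hm x = i := (List.cons.injEq _ _ _ _).mp hw |>.1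
        have hwt : word p hm t.length (rmap p hm x) = t := (List.cons.injEq _ _ _ _).mp hw |>.2
        have hspec := dig_spec hp hm hps ⟨hx0, hx1⟩
        rw [hdi] at hspec
        have hr : rmap p hm x ∈ Set.Ico a (a + bw p t) := by
          rw [← hset]
          exact ⟨rmap_mem hp hm hps ⟨hx0, hx1⟩, hwt⟩
        have hrdef : rmap p hm x = (x - qf p i) / p i := by
          unfold rmap; rw [hdi]
        rw [hrdef, Set.mem_Ico, le_div_iff₀ hpi, div_lt_iff₀ hpi] at hr
        constructor
        · nlinarith [hr.1]
        · nlinarith [hr.2]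
      · rintro ⟨hx0, hx1⟩
        have hxl : qf p i ≤ x := by nlinarith
        have hxu : x < qf p ((i : ℕ) + 1) := by nlinarith
        have hxI : x ∈ Set.Ico (0 : ℝ) 1 := ⟨by linarith, by linarith⟩
        have hdi : dig p hm x = i := dig_unique hp hm hxl hxu
        have hrdef : rmap p hm x = (x - qf p i) / p i := by
          unfold rmap; rw [hdi]
        have hr : rmap p hm x ∈ Set.Ico a (a + bw p t) := by
          rw [hrdef, Set.mem_Ico, le_div_iff₀ hpi, div_lt_iff₀ hpi]
          constructor
          · nlinarith
          · nlinarith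
        rw [← hset] at hr
        exact ⟨hxI, by rw [hdi, hr.2]⟩

/-! ### Measurability -/

lemma measurable_dig {p : Fin m → ℝ} (hp : ∀ i, 0 < p i) (hm : 0 < m) :
    Measurable (dig p hm) := by
  apply measurable_to_countable'
  intro i
  have hfib : dig p hm ⁻¹' {i} = Set.Ico (qf p i) (qf p ((i : ℕ) + 1)) ∪
      ((⋃ j : Fin m, Set.Ico (qf p j) (qf p ((j : ℕ) + 1)))ᶜ ∩
        {x : ℝ | (⟨0, hm⟩ : Fin m) = i}) := by
    ext x
    simp only [Set.mem_preimage, Set.mem_singleton_iff, Set.mem_union, Set.mem_Ico,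
      Set.mem_inter_iff, Set.mem_compl_iff, Set.mem_iUnion, Set.mem_setOf_eq]
    constructor
    · intro hdx
      by_cases h : ∃ j : Fin m, qf p j ≤ x ∧ x < qf p ((j : ℕ) + 1)
      · left
        have := h.choose_spec
        rw [dig, dif_pos h] at hdx
        rw [← hdx]
        exact this
      · right
        push_neg at h
        refine ⟨?_, ?_⟩
        · intro ⟨j, hj1, hj2⟩
          exact absurd hj2 (not_lt_of_ge (by simpa using (h j hj1)))
        · rw [dig, dif_neg (by push_neg; exact h)] at hdx
          exact hdx
    · rintro (⟨h1, h2⟩ | ⟨hc, hi⟩)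
      · exact dig_unique hp hm h1 h2
      · have h : ¬ ∃ j : Fin m, qf p j ≤ x ∧ x < qf p ((j : ℕ) + 1) := by
          intro ⟨j, hj1, hj2⟩
          exact hc ⟨j, hj1, hj2⟩
        rw [dig, dif_neg h]
        exact hi
  rw [hfib]
  apply MeasurableSet.union measurableSet_Ico
  apply MeasurableSet.inter
  · exact (MeasurableSet.iUnion fun j => measurableSet_Ico).compl
  · by_cases h : (⟨0, hm⟩ : Fin m) = i
    · simp [h]
    · simp [h]

lemma measurable_of_fin {α : Type*} [MeasurableSpace α] (g : Fin m → α) : Measurable g :=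
  fun _ _ => trivial

lemma measurable_rmap {p : Fin m → ℝ} (hp : ∀ i, 0 < p i) (hm : 0 < m) :
    Measurable (rmap p hm) := by
  have hd := measurable_dig hp hm
  exact (measurable_id.sub ((measurable_of_fin (fun i => qf p i)).comp hd)).div
    ((measurable_of_fin p).comp hd)

lemma measurable_word_fiber {p : Fin m → ℝ} (hp : ∀ i, 0 < p i) (hm : 0 < m)
    (n : ℕ) (w : List (Fin m)) : MeasurableSet {x : ℝ | word p hm n x = w} := by
  induction n generalizing w with
  | zero =>
    rcases w with _ | ⟨i, t⟩
    · simp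
    · convert MeasurableSet.empty
      ext x; simp
  | succ k ih =>
    rcases w with _ | ⟨i, t⟩
    · convert MeasurableSet.empty
      ext x; simp
    · have : {x : ℝ | word p hm (k + 1) x = i :: t}
          = (dig p hm ⁻¹' {i}) ∩ (rmap p hm ⁻¹' {y : ℝ | word p hm k y = t}) := by
        ext x
        simp [List.cons.injEq]
      rw [this]
      exact ((measurable_dig hp hm) (measurableSet_singleton i)).inter
        ((measurable_rmap hp hm) (ih t))

lemma measurable_word_comp {p : Fin m → ℝ} (hp : ∀ i, 0 < p i) (hm : 0 < m)
    {α : Type*} [MeasurableSpace α] (n : ℕ) (g : List (Fin m) → α) :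
    Measurable (fun x => g (word p hm n x)) := by
  letI : MeasurableSpace (List (Fin m)) := ⊤
  have hw : Measurable (word p hm n) := by
    apply measurable_to_countable
    intro y
    have : word p hm n ⁻¹' {word p hm n y} = {x : ℝ | word p hm n x = word p hm n y} := by
      ext x; simp
    rw [this]
    exact measurable_word_fiber hp hm n _
  exact measurable_from_top.comp hw

end Stmt7Aux

open Stmt7Aux

/-- Lower bound for the Hausdorff dimension of the limit set of an iterated function
scheme of contractions with disjoint images and expansion constants `b_i`:
if `Σ b_i^s = 1` then `dim X ≥ s`. -/
theorem stmt7 (m : ℕ) (hm : 0 < m) (D : Set ℂ) (hD : IsCompact D)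
    (T : Fin m → ℂ → ℂ) (hmaps : ∀ i, Set.MapsTo (T i) D D)
    (hcontr : ∀ i, ∃ c ∈ Set.Ioo (0:ℝ) 1, ∀ z ∈ D, ∀ w ∈ D,
      dist (T i z) (T i w) ≤ c * dist z w)
    (hdisj : ∀ i j, i ≠ j → Disjoint (T i '' D) (T j '' D))
    (b : Fin m → ℝ) (hb : ∀ i, b i ∈ Set.Ioo (0:ℝ) 1)
    (hlow : ∀ i, ∀ z ∈ D, ∀ w ∈ D, b i * dist z w ≤ dist (T i z) (T i w))
    (s : ℝ) (hs : 0 < s) (hsum : ∑ i, b i ^ s = 1)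
    (X : Set ℂ) (hXne : X.Nonempty) (hXc : IsCompact X) (hXD : X ⊆ D)
    (hXinv : X = ⋃ i, T i '' X) :
    ENNReal.ofReal s ≤ dimH X := by
  classical
  obtain ⟨x₀, hx₀X⟩ := hXne
  have hx₀D : x₀ ∈ D := hXD hx₀X
  -- m ≥ 2
  have hm2 : 2 ≤ m := by
    rcases Nat.lt_or_ge m 2 with h | h
    · exfalso
      have hm1 : m = 1 := by omega
      subst hm1
      rw [Fin.sum_univ_one] at hsum
      have := Real.rpow_lt_one (hb 0).1.le (hb 0).2 hs
      rw [hsum] at this; exact lt_irrefl 1 this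
    · exact h
  haveI : Nonempty (Fin m) := ⟨⟨0, hm⟩⟩
  -- contraction constants
  have hcc : ∀ i : Fin m, ∃ ci : ℝ, ci ∈ Set.Ioo (0:ℝ) 1 ∧
      ∀ z ∈ D, ∀ w ∈ D, dist (T i z) (T i w) ≤ ci * dist z w := by
    intro i; obtain ⟨ci, h1, h2⟩ := hcontr i; exact ⟨ci, h1, h2⟩
  choose c hcIoo hcLip using hcc
  have hc0 : ∀ i, 0 < c i := fun i => (hcIoo i).1
  have hc1 : ∀ i, c i < 1 := fun i => (hcIoo i).2
  set cmax : ℝ := Finset.univ.sup' Finset.univ_nonempty c with hcmax_def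
  have hcmax_le : ∀ i, c i ≤ cmax := fun i => Finset.le_sup' c (Finset.mem_univ i)
  have hcmax0 : 0 < cmax := lt_of_lt_of_le (hc0 ⟨0, hm⟩) (hcmax_le _)
  have hcmax1 : cmax < 1 := by
    rw [hcmax_def, Finset.sup'_lt_iff]
    intro i _; exact hc1 i
  set bmax : ℝ := Finset.univ.sup' Finset.univ_nonempty b with hbmax_def
  have hbmax_le : ∀ i, b i ≤ bmax := fun i => Finset.le_sup' b (Finset.mem_univ i)
  have hbmax0 : 0 < bmax := lt_of_lt_of_le (hb ⟨0, hm⟩).1 (hbmax_le _)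
  have hbmax1 : bmax < 1 := by
    rw [hbmax_def, Finset.sup'_lt_iff]
    intro i _; exact (hb i).2
  -- weights
  set p : Fin m → ℝ := fun i => b i ^ s with hp_def
  have hp : ∀ i, 0 < p i := fun i => Real.rpow_pos_of_pos (hb i).1 s
  have hps : ∑ i, p i = 1 := hsum
  have hb0 : ∀ i, 0 < b i := fun i => (hb i).1
  -- continuity of the maps on D
  have hTcont : ∀ i, ContinuousOn (T i) D := by
    intro i
    have : LipschitzOnWith (Real.toNNReal (c i)) (T i) D := by
      rw [lipschitzOnWith_iff_dist_le_mul]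
      intro x hx y hy
      rw [Real.coe_toNNReal _ (hc0 i).le]
      exact hcLip i x hx y hy
    exact this.continuousOn
  -- separation constant
  have hsep : ∀ i j : Fin m, i ≠ j → ∃ d : ℝ, 0 < d ∧
      ∀ z1 ∈ T i '' D, ∀ z2 ∈ T j '' D, d ≤ dist z1 z2 := by
    intro i j hij
    have hKi : IsCompact (T i '' D) := hD.image_of_continuousOn (hTcont i)
    have hKj : IsCompact (T j '' D) := hD.image_of_continuousOn (hTcont j)
    obtain ⟨d, hd, hdisj'⟩ := (hdisj i j hij).exists_thickenings hKi hKj.isClosed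
    refine ⟨d, hd, ?_⟩
    intro z1 h1 z2 h2
    by_contra hlt
    push_neg at hlt
    have hz2i : z2 ∈ Metric.thickening d (T i '' D) := by
      rw [Metric.mem_thickening_iff]
      exact ⟨z1, h1, by rwa [dist_comm]⟩
    have hz2j : z2 ∈ Metric.thickening d (T j '' D) :=
      Metric.self_subset_thickening hd _ h2
    exact Set.disjoint_left.mp hdisj' hz2i hz2j
  obtain ⟨δ, hδpos, hδ2⟩ : ∃ δ : ℝ, 0 < δ ∧ ∀ i j : Fin m, i ≠ j →
      ∀ z1 ∈ T i '' D, ∀ z2 ∈ T j '' D, δ ≤ dist z1 z2 := by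
    choose! d hd1 hd2 using hsep
    have hpair : ((⟨0, by omega⟩ : Fin m), (⟨1, by omega⟩ : Fin m)) ∈
        Finset.univ.filter (fun pr : Fin m × Fin m => pr.1 ≠ pr.2) := by
      simp [Fin.ext_iff]
    refine ⟨(Finset.univ.filter (fun pr : Fin m × Fin m => pr.1 ≠ pr.2)).inf'
      ⟨_, hpair⟩ (fun pr => d pr.1 pr.2), ?_, ?_⟩
    · apply (Finset.lt_inf'_iff _).2
      rintro ⟨i, j⟩ hij
      simp only [Finset.mem_filter, Finset.mem_univ, true_and] at hij
      exact hd1 i j hij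
    · intro i j hij z1 h1 z2 h2
      have hmem : (i, j) ∈ Finset.univ.filter (fun pr : Fin m × Fin m => pr.1 ≠ pr.2) := by
        simp [hij]
      exact le_trans (Finset.inf'_le (fun pr : Fin m × Fin m => d pr.1 pr.2) hmem)
        (hd2 i j hij z1 h1 z2 h2)
  -- word notation
  set W : ℕ → ℝ → List (Fin m) := word p hm with hWdef
  set f : ℕ → ℝ → ℂ := fun n x => Tw T (W n x) x₀ with hfdef
  -- the maps Tw map X into X
  have hTX : ∀ i, Set.MapsTo (T i) X X := by
    intro i x hx
    rw [hXinv]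
    exact Set.mem_iUnion.2 ⟨i, Set.mem_image_of_mem _ hx⟩
  have hTwX : ∀ w : List (Fin m), Tw T w x₀ ∈ X := fun w => Tw_mapsTo hTX w hx₀X
  have hTwD : ∀ (w : List (Fin m)) {z : ℂ}, z ∈ D → Tw T w z ∈ D :=
    fun w {z} hz => Tw_mapsTo hmaps w hz
  -- Cauchy
  have hbwc : ∀ (n : ℕ) (x : ℝ), bw c (W n x) ≤ cmax ^ n := by
    intro n x
    have := bw_le_pow hcmax0.le (fun i => (hc0 i).le) hcmax_le (W n x)
    rwa [hWdef, word_length] at this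
  have hdistf : ∀ (n : ℕ) (x : ℝ), dist (f n x) (f (n + 1) x) ≤ Metric.diam D * cmax ^ n := by
    intro n x
    have hw1 : W (n + 1) x = W n x ++ W 1 ((rmap p hm)^[n] x) := word_add p hm n 1 x
    have hfn1 : f (n + 1) x = Tw T (W n x) (Tw T (W 1 ((rmap p hm)^[n] x)) x₀) := by
      rw [hfdef]
      simp only
      rw [hw1, Tw_append]
      rfl
    have hzD : Tw T (W 1 ((rmap p hm)^[n] x)) x₀ ∈ D := hTwD _ hx₀D
    have h1 : dist (f n x) (f (n + 1) x) ≤ bw c (W n x) * dist x₀ (Tw T (W 1 ((rmap p hm)^[n] x)) x₀) := by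
      rw [hfn1]
      exact Tw_dist_le hmaps (fun i => (hc0 i).le) hcLip (W n x) x₀ hx₀D _ hzD
    have h2 : dist x₀ (Tw T (W 1 ((rmap p hm)^[n] x)) x₀) ≤ Metric.diam D :=
      Metric.dist_le_diam_of_mem hD.isBounded hx₀D hzD
    calc dist (f n x) (f (n + 1) x)
        ≤ bw c (W n x) * dist x₀ (Tw T (W 1 ((rmap p hm)^[n] x)) x₀) := h1
      _ ≤ cmax ^ n * Metric.diam D := by
          apply mul_le_mul (hbwc n x) h2 dist_nonneg (by positivity)
      _ = Metric.diam D * cmax ^ n := by ring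
  have hf_cauchy : ∀ x : ℝ, CauchySeq (fun n => f n x) := by
    intro x
    exact cauchySeq_of_le_geometric cmax (Metric.diam D) hcmax1 (fun n => hdistf n x)
  set F : ℝ → ℂ := fun x => limUnder atTop (fun n => f n x) with hFdef
  have hFt : ∀ x, Tendsto (fun n => f n x) atTop (𝓝 (F x)) :=
    fun x => (hf_cauchy x).tendsto_limUnder
  -- continuity of Tw on D
  have hTwCont : ∀ w : List (Fin m), ContinuousOn (Tw T w) D := by
    intro w
    have : LipschitzOnWith (Real.toNNReal (bw c w)) (Tw T w) D := by
      rw [lipschitzOnWith_iff_dist_le_mul]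
      intro z hz y hy
      rw [Real.coe_toNNReal _ (bw_nonneg (fun i => (hc0 i).le) w)]
      exact Tw_dist_le hmaps (fun i => (hc0 i).le) hcLip w z hz y hy
    exact this.continuousOn
  -- F x lies in every cylinder along x
  have hFmem : ∀ (x : ℝ) (n : ℕ), F x ∈ Tw T (W n x) '' X := by
    intro x n
    have hcomp : IsCompact (Tw T (W n x) '' X) :=
      hXc.image_of_continuousOn ((hTwCont (W n x)).mono hXD)
    have htail : Tendsto (fun k => f (n + k) x) atTop (𝓝 (F x)) := by
      apply (hFt x).comp
      exact tendsto_atTop_mono (fun k => Nat.le_add_left k n) tendsto_id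
    apply hcomp.isClosed.mem_of_tendsto htail
    filter_upwards with k
    have hw : W (n + k) x = W n x ++ W k ((rmap p hm)^[n] x) := word_add p hm n k x
    have : f (n + k) x = Tw T (W n x) (Tw T (W k ((rmap p hm)^[n] x)) x₀) := by
      rw [hfdef]; simp only; rw [hw, Tw_append]; rfl
    rw [this]
    exact Set.mem_image_of_mem _ (hTwX _)
  have hFX : ∀ x, F x ∈ X := by
    intro x
    have := hFmem x 0
    rwa [hWdef, word_zero, Tw_nil, Set.image_id] at this
  -- measurability of F
  have hfmeas : ∀ n, Measurable (f n) := by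
    intro n
    exact measurable_word_comp hp hm n (fun w => Tw T w x₀)
  have hFmeas : Measurable F :=
    measurable_of_tendsto_metrizable hfmeas (tendsto_pi_nhds.mpr hFt)
  -- the measure
  set μ : Measure ℂ := Measure.map F (volume.restrict (Set.Ico (0:ℝ) 1)) with hμdef
  have hμX : μ X = 1 := by
    rw [hμdef, Measure.map_apply hFmeas hXc.isClosed.measurableSet,
      Measure.restrict_apply (hFmeas hXc.isClosed.measurableSet)]
    have hpre : F ⁻¹' X ∩ Set.Ico (0:ℝ) 1 = Set.Ico (0:ℝ) 1 :=
      Set.inter_eq_self_of_subset_right (fun x _ => hFX x)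
    rw [hpre]
    simp [Real.volume_Ico]
  -- stopping times exist
  have hstop : ∀ r : ℝ, 0 < r → ∀ x : ℝ, ∃ n, bw b (W n x) < r := by
    intro r hr x
    obtain ⟨n, hn⟩ := exists_pow_lt_of_lt_one hr hbmax1
    refine ⟨n, lt_of_le_of_lt ?_ hn⟩
    have := bw_le_pow hbmax0.le (fun i => (hb0 i).le) hbmax_le (W n x)
    rwa [hWdef, word_length] at this
  -- KEY estimate
  have key : ∀ r : ℝ, 0 < r → r ≤ 1 → ∀ V : Set ℂ, MeasurableSet V →
      (∀ z1 ∈ V, ∀ z2 ∈ V, dist z1 z2 < δ * r) → μ V ≤ ENNReal.ofReal (r ^ s) := by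
    intro r hr hr1 V hV hVd
    rw [hμdef, Measure.map_apply hFmeas hV, Measure.restrict_apply (hFmeas hV)]
    set S := F ⁻¹' V ∩ Set.Ico (0:ℝ) 1 with hSdef
    rcases S.eq_empty_or_nonempty with hSe | ⟨y₀, hy₀⟩
    · rw [hSe]; simp
    have hex : ∀ x : ℝ, ∃ n, bw b (W n x) < r := hstop r hr
    have hfind1 : ∀ x : ℝ, 1 ≤ Nat.find (hex x) := by
      intro x
      rcases Nat.eq_zero_or_pos (Nat.find (hex x)) with h0 | h
      · exfalso
        have := Nat.find_spec (hex x)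
        rw [h0] at this
        rw [hWdef, word_zero, bw_nil] at this
        linarith
      · exact h
    -- all points of S lie in the same stopped cylinder
    have hclaim : ∀ x ∈ S, W (Nat.find (hex x)) x = W (Nat.find (hex y₀)) y₀ := by
      intro x hx
      have hFxV : F x ∈ V := hx.1
      have hFyV : F y₀ ∈ V := hy₀.1
      set nx := Nat.find (hex x) with hnx
      set ny := Nat.find (hex y₀) with hny
      by_cases hsame : W (min nx ny) x = W (min nx ny) y₀
      · rcases le_total nx ny with hle | hle
        · rw [min_eq_left hle] at hsame
          have hlt : bw b (W nx y₀) < r := by rw [← hsame]; exact Nat.find_spec (hex x)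
          have h2 : ny ≤ nx := Nat.find_min' (hex y₀) hlt
          have heq : nx = ny := le_antisymm hle h2
          rw [← heq]; exact hsame
        · rw [min_eq_right hle] at hsame
          have hlt : bw b (W ny x) < r := by rw [hsame]; exact Nat.find_spec (hex y₀)
          have h2 : nx ≤ ny := Nat.find_min' (hex x) hlt
          have heq : nx = ny := le_antisymm h2 hle
          rw [heq]; exact hsame
      · exfalso
        have hminpos : 1 ≤ min nx ny := le_min (hfind1 x) (hfind1 y₀)
        have hexk : ∃ k, W (k + 1) x ≠ W (k + 1) y₀ := by
          refine ⟨min nx ny - 1, ?_⟩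
          rwa [Nat.sub_add_cancel hminpos]
        set K := Nat.find hexk with hKdef
        have hKdiff : W (K + 1) x ≠ W (K + 1) y₀ := Nat.find_spec hexk
        have hKeq : W K x = W K y₀ := by
          rcases Nat.eq_zero_or_pos K with h0 | h0
          · rw [h0]; rfl
          · have hKm := Nat.find_min hexk (show K - 1 < K from Nat.sub_lt h0 one_pos)
            rw [Nat.sub_add_cancel h0] at hKm
            exact not_ne_iff.mp hKm
        have hKlt : K < min nx ny := by
          by_contra hge
          push_neg at hge
          apply hsame
          have hq1 : W (min nx ny) x = (W K x).take (min nx ny) := by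
            rw [hWdef]; exact (word_take p hm hge x).symm
          have hq2 : W (min nx ny) y₀ = (W K y₀).take (min nx ny) := by
            rw [hWdef]; exact (word_take p hm hge y₀).symm
          rw [hq1, hq2, hKeq]
        set i := dig p hm ((rmap p hm)^[K] x) with hidef
        set j := dig p hm ((rmap p hm)^[K] y₀) with hjdef
        have hW1x : W (K + 1) x = W K x ++ [i] := by
          rw [hWdef, word_add p hm K 1 x]; rfl
        have hW1y : W (K + 1) y₀ = W K y₀ ++ [j] := by
          rw [hWdef, word_add p hm K 1 y₀]; rfl
        have hij : i ≠ j := by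
          intro hdd
          apply hKdiff
          rw [hW1x, hW1y, hKeq, hdd]
        have hFx : F x ∈ Tw T (W K x) '' (T i '' D) := by
          have h1 := hFmem x (K + 1)
          rw [hW1x, Tw_append, Set.image_comp] at h1
          refine Set.image_mono ?_ h1
          have : Tw T [i] '' X = T i '' X := by
            rw [Tw_cons, Tw_nil]
            simp [Set.image_comp]
          rw [this]
          exact Set.image_mono hXD
        have hFy : F y₀ ∈ Tw T (W K x) '' (T j '' D) := by
          have h1 := hFmem y₀ (K + 1)
          rw [hW1y, Tw_append, Set.image_comp, ← hKeq] at h1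
          refine Set.image_mono ?_ h1
          have : Tw T [j] '' X = T j '' X := by
            rw [Tw_cons, Tw_nil]
            simp [Set.image_comp]
          rw [this]
          exact Set.image_mono hXD
        obtain ⟨z1, hz1, hz1e⟩ := hFx
        obtain ⟨z2, hz2, hz2e⟩ := hFy
        have hz1D : z1 ∈ D := by
          obtain ⟨u, hu, rfl⟩ := hz1
          exact hmaps i hu
        have hz2D : z2 ∈ D := by
          obtain ⟨u, hu, rfl⟩ := hz2
          exact hmaps j hu
        have hsep' : δ ≤ dist z1 z2 := hδ2 i j hij z1 hz1 z2 hz2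
        have hlow' : bw b (W K x) * dist z1 z2 ≤ dist (F x) (F y₀) := by
          rw [← hz1e, ← hz2e]
          exact Tw_dist_ge hmaps hlow hb0 (W K x) z1 hz1D z2 hz2D
        have hbwK : r ≤ bw b (W K x) := by
          by_contra hcon
          push_neg at hcon
          have := Nat.find_min' (hex x) hcon
          omega
        have hVd' := hVd _ hFxV _ hFyV
        have hbwpos : 0 < bw b (W K x) := bw_pos hb0 _
        nlinarith
    -- inclusion in the cylinder interval
    obtain ⟨a, ha0, ha1, hcyl⟩ := cylinder_eq hp hm hps (W (Nat.find (hex y₀)) y₀)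
    have hsub : S ⊆ Set.Ico a (a + bw p (W (Nat.find (hex y₀)) y₀)) := by
      intro x hx
      rw [← hcyl]
      refine ⟨hx.2, ?_⟩
      have hcx := hclaim x hx
      have hl := congrArg List.length hcx
      simp only [hWdef, word_length] at hl
      calc word p hm (W (Nat.find (hex y₀)) y₀).length x
          = W (Nat.find (hex x)) x := by
            simp only [hWdef, word_length]
            rw [hl]
        _ = W (Nat.find (hex y₀)) y₀ := hcx
    have hvol : volume S ≤ ENNReal.ofReal (bw p (W (Nat.find (hex y₀)) y₀)) := by
      calc volume S ≤ volume (Set.Ico a (a + bw p (W (Nat.find (hex y₀)) y₀))) :=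
            measure_mono hsub
        _ = ENNReal.ofReal (bw p (W (Nat.find (hex y₀)) y₀)) := by
            rw [Real.volume_Ico]; congr 1; ring
    refine le_trans hvol ?_
    apply ENNReal.ofReal_le_ofReal
    have hbwr : bw p (W (Nat.find (hex y₀)) y₀) = bw b (W (Nat.find (hex y₀)) y₀) ^ s :=
      bw_rpow hb0 s _
    rw [hbwr]
    exact Real.rpow_le_rpow (bw_nonneg (fun i => (hb0 i).le) _)
      (Nat.find_spec (hex y₀)).le hs.le
  -- mass distribution principle
  set ν : Measure ℂ := (ENNReal.ofReal δ ^ s) • μ with hνdef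
  have hδne0 : ENNReal.ofReal δ ≠ 0 := by
    simp [ENNReal.ofReal_eq_zero, not_le, hδpos]
  have hν_le : ν ≤ μH[s] := by
    apply Measure.le_hausdorffMeasure s ν (ENNReal.ofReal (δ / 2))
      (ENNReal.ofReal_pos.mpr (by linarith))
    intro t ht
    have htne : EMetric.diam t ≠ ⊤ := (lt_of_le_of_lt ht ENNReal.ofReal_lt_top).ne
    have het : (EMetric.diam t).toReal ≤ δ / 2 :=
      ENNReal.toReal_le_of_le_ofReal (by linarith) ht
    have hseq : ∀ n : ℕ, 1 ≤ n →
        μ t ≤ ENNReal.ofReal (((EMetric.diam t).toReal / δ + 1 / ((n : ℝ) + 1)) ^ s) := by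
      intro n hn
      set r := (EMetric.diam t).toReal / δ + 1 / ((n : ℝ) + 1) with hrdef
      have hdt0 : 0 ≤ (EMetric.diam t).toReal := ENNReal.toReal_nonneg
      have hr0 : 0 < r := by positivity
      have hcast : (1 : ℝ) ≤ (n : ℝ) := by exact_mod_cast hn
      have hr1 : r ≤ 1 := by
        have h1 : (EMetric.diam t).toReal / δ ≤ 1 / 2 := by
          rw [div_le_iff₀ hδpos]
          linarith
        have h2 : 1 / ((n : ℝ) + 1) ≤ 1 / 2 :=
          one_div_le_one_div_of_le (by norm_num) (by linarith)
        rw [hrdef]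
        linarith
      have hdist : ∀ z1 ∈ closure t, ∀ z2 ∈ closure t, dist z1 z2 < δ * r := by
        intro z1 h1 z2 h2
        have hed : edist z1 z2 ≤ EMetric.diam t := by
          change edist z1 z2 ≤ Metric.ediam t; rw [← Metric.ediam_closure]
          exact EMetric.edist_le_diam_of_mem h1 h2
        have hdd : dist z1 z2 ≤ (EMetric.diam t).toReal := by
          rw [dist_edist]
          exact ENNReal.toReal_mono htne hed
        have hda : δ * ((EMetric.diam t).toReal / δ) = (EMetric.diam t).toReal := by
          field_simp
        have hpos : 0 < 1 / ((n : ℝ) + 1) := by positivity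
        have hdr : δ * r = (EMetric.diam t).toReal + δ * (1 / ((n : ℝ) + 1)) := by
          rw [hrdef, mul_add, hda]
        calc dist z1 z2 ≤ (EMetric.diam t).toReal := hdd
          _ < δ * r := by rw [hdr]; linarith [mul_pos hδpos hpos]
      have := key r hr0 hr1 (closure t) isClosed_closure.measurableSet hdist
      exact le_trans (measure_mono subset_closure) this
    have hlim : Tendsto
        (fun n : ℕ => ENNReal.ofReal (((EMetric.diam t).toReal / δ + 1 / ((n : ℝ) + 1)) ^ s))
        atTop (𝓝 (ENNReal.ofReal (((EMetric.diam t).toReal / δ) ^ s))) := by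
      apply ENNReal.continuous_ofReal.continuousAt.tendsto.comp
      have h1 : Tendsto (fun n : ℕ => (EMetric.diam t).toReal / δ + 1 / ((n : ℝ) + 1)) atTop
          (𝓝 ((EMetric.diam t).toReal / δ)) := by
        have h0 := tendsto_one_div_add_atTop_nhds_zero_nat (𝕜 := ℝ)
        have := tendsto_const_nhds (x := (EMetric.diam t).toReal / δ) (f := atTop (α := ℕ)) |>.add h0
        simpa using this
      have h2 : ContinuousAt (fun y : ℝ => y ^ s) ((EMetric.diam t).toReal / δ) :=
        Real.continuousAt_rpow_const _ _ (Or.inr hs.le)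
      exact h2.tendsto.comp h1
    have hμt : μ t ≤ ENNReal.ofReal (((EMetric.diam t).toReal / δ) ^ s) := by
      apply ge_of_tendsto hlim
      filter_upwards [eventually_ge_atTop 1] with n hn using hseq n hn
    have hcalc : ENNReal.ofReal (((EMetric.diam t).toReal / δ) ^ s)
        = (EMetric.diam t / ENNReal.ofReal δ) ^ s := by
      rw [← ENNReal.ofReal_rpow_of_nonneg (by positivity) hs.le]
      congr 1
      rw [ENNReal.ofReal_div_of_pos hδpos, ENNReal.ofReal_toReal htne]
    have : ν t = ENNReal.ofReal δ ^ s * μ t := by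
      rw [hνdef, Measure.smul_apply, smul_eq_mul]
    rw [this]
    calc ENNReal.ofReal δ ^ s * μ t
        ≤ ENNReal.ofReal δ ^ s * (EMetric.diam t / ENNReal.ofReal δ) ^ s := by
          exact mul_le_mul_right (le_of_le_of_eq hμt hcalc) _
      _ = (ENNReal.ofReal δ * (EMetric.diam t / ENNReal.ofReal δ)) ^ s :=
          (ENNReal.mul_rpow_of_nonneg _ _ hs.le).symm
      _ = EMetric.diam t ^ s := by
          rw [ENNReal.mul_div_cancel hδne0 ENNReal.ofReal_ne_top]
  -- conclude
  have hHX : μH[s] X ≠ 0 := by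
    have h1 : ν X ≤ μH[s] X := Measure.le_iff'.mp hν_le X
    have h2 : ν X = ENNReal.ofReal δ ^ s := by
      rw [hνdef, Measure.smul_apply, smul_eq_mul, hμX, mul_one]
    intro h0
    rw [h0, h2] at h1
    have : (0 : ℝ≥0∞) < ENNReal.ofReal δ ^ s :=
      ENNReal.rpow_pos (ENNReal.ofReal_pos.mpr hδpos) ENNReal.ofReal_ne_top
    exact absurd h1 (not_le.mpr this)
  have hfinal : (↑s.toNNReal : ℝ≥0∞) ≤ dimH X := by
    apply le_dimH_of_hausdorffMeasure_ne_zero (d := s.toNNReal)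
    rwa [Real.coe_toNNReal s hs.le]
  simpa [ENNReal.ofReal] using hfinal
end
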